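/- (Lemma, concrete form.) Let N be an odd integer with N ≥ 3, let L, m_i, m_h be positive reals, set δk = 2π/L, k_F = δk(N−1)/2, q0 = min(k_F, (m_i/m_h)·k_F), and C = (k_F²/(6m_h))·N(N+1)/(N−1). Let p0 be a real number with 0 ≤ p0 < q0. Let S be a finite set of integers with card S = N, define the host energy E⁰_K = (δk²/(2m_h))·Σ_{n∈S} n² − C, and let k be a real number such that δk·(Σ_{n∈S} n) + k = p0 (total momentum conservation). Then p0 − k ≤ (m_i/(q0 − p0))·(E⁰_K + k²/(2m_i) − p0²/(2m_i)). -/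

import Mathlib

set_option maxHeartbeats 1000000

open Finset

private lemma sum_id_int (n : ℕ) : 2 * ∑ i ∈ range n, (i : ℤ) = n * (n - 1) := by
  induction n with
  | zero => simp
  | succ n ih =>
    rw [Finset.sum_range_succ]
    push_cast
    push_cast at ih
    linear_combination ih

private lemma sum_sq_int (n : ℕ) :
    6 * ∑ i ∈ range n, (i : ℤ) ^ 2 = n * (n - 1) * (2 * n - 1) := by
  induction n with
  | zero => simp
  | succ n ih =>
    rw [Finset.sum_range_succ]
    push_cast
    push_cast at ih
    linear_combination ih

private lemma list_sum_getD (l : List ℤ) (f : ℤ → ℤ) :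
    (l.map f).sum = ∑ i ∈ range l.length, f (l.getD i 0) := by
  induction l with
  | nil => simp
  | cons a t ih =>
    rw [List.map_cons, List.sum_cons, List.length_cons, Finset.sum_range_succ']
    simp only [List.getD_cons_succ, List.getD_cons_zero]
    rw [ih]
    ring

private lemma finset_sum_eq (S : Finset ℤ) (f : ℤ → ℤ) :
    ∑ x ∈ S, f x
      = ∑ i ∈ range (S.sort (· ≤ ·)).length, f ((S.sort (· ≤ ·)).getD i 0) := by
  rw [← list_sum_getD]
  have h1 : ∑ x ∈ S, f x = ((S.1.map f)).sum := rfl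
  rw [h1, ← Finset.sort_eq S (· ≤ ·), Multiset.map_coe, Multiset.sum_coe]

private lemma mono_of_step (n : ℕ) (m : ℕ → ℤ)
    (h : ∀ i, i + 1 < n → m i ≤ m (i + 1)) :
    ∀ i j, i ≤ j → j < n → m i ≤ m j := by
  intro i j
  induction j with
  | zero => intro hij _; interval_cases i; exact le_refl _
  | succ j ih =>
    intro hij hj
    rcases Nat.eq_or_lt_of_le hij with rfl | hlt
    · exact le_refl _
    · exact (ih (Nat.lt_succ_iff.mp hlt) (Nat.lt_of_succ_lt hj)).trans (h j hj)

/-- Core inequality: for a nondecreasing integer sequence on `[0, n)`,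
`2 ∑ (n−1−i) m i ≤ ∑ m i ^ 2 + (∑ m i)^2`. -/
private lemma core (n : ℕ) (m : ℕ → ℤ)
    (hm : ∀ i j, i ≤ j → j < n → m i ≤ m j) :
    2 * ∑ i ∈ range n, ((n : ℤ) - 1 - i) * m i
      ≤ (∑ i ∈ range n, (m i) ^ 2) + (∑ i ∈ range n, m i) ^ 2 := by
  set Pos := (range n).filter (fun i => 0 < m i) with hPosdef
  set Neg := (range n).filter (fun i => m i < 0) with hNegdef
  set q := Pos.card with hq
  set A := ∑ i ∈ Neg, (-(m i)) with hA
  set B := ∑ i ∈ Pos, m i with hB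
  have helper : ∀ g : ℕ → ℤ, (∀ i, m i = 0 → g i = 0) →
      ∑ i ∈ range n, g i = (∑ i ∈ Neg, g i) + ∑ i ∈ Pos, g i := by
    intro g hg
    rw [← Finset.sum_filter_add_sum_filter_not (range n) (fun i => m i < 0) g]
    congr 1
    rw [← Finset.sum_filter_add_sum_filter_not
        ((range n).filter (fun i => ¬ m i < 0)) (fun i => 0 < m i) g]
    have e1 : ((range n).filter (fun i => ¬ m i < 0)).filter (fun i => 0 < m i) = Pos := by
      rw [Finset.filter_filter, hPosdef]
      apply Finset.filter_congr
      intro x _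
      constructor
      · rintro ⟨_, h2⟩; exact h2
      · intro h2; exact ⟨by omega, h2⟩
    have e2 : ∑ i ∈ ((range n).filter (fun i => ¬ m i < 0)).filter (fun i => ¬ 0 < m i), g i
        = 0 := by
      apply Finset.sum_eq_zero
      intro x hx
      simp only [Finset.mem_filter] at hx
      exact hg x (by omega)
    rw [e1, e2, add_zero]
  have hqn : q ≤ n := by
    rw [hq]
    calc Pos.card ≤ (range n).card := Finset.card_le_card (Finset.filter_subset _ _)
    _ = n := Finset.card_range n
  have hA0 : 0 ≤ A := Finset.sum_nonneg fun i hi => by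
    simp only [hNegdef, Finset.mem_filter] at hi; omega
  have hqB : (q : ℤ) ≤ B := by
    have := Finset.card_nsmul_le_sum Pos m 1 (fun i hi => by
      simp only [hPosdef, Finset.mem_filter] at hi; omega)
    simpa using this
  have hB0 : (0 : ℤ) ≤ B := le_trans (by positivity) hqB
  have hPosIco : Pos = Finset.Ico (n - q) n := by
    apply Finset.eq_of_subset_of_card_le
    · intro j hj
      have hj' := hj
      simp only [hPosdef, Finset.mem_filter, Finset.mem_range] at hj'
      have hsub : Finset.Ico j n ⊆ Pos := by
        intro i hi
        simp only [Finset.mem_Ico] at hi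
        simp only [hPosdef, Finset.mem_filter, Finset.mem_range]
        exact ⟨hi.2, lt_of_lt_of_le hj'.2 (hm j i hi.1 hi.2)⟩
      have hcard : n - j ≤ q := by
        have := Finset.card_le_card hsub
        rwa [Nat.card_Ico] at this
      simp only [Finset.mem_Ico]
      omega
    · rw [Nat.card_Ico, ← hq]
      omega
  have hfsum : 2 * ∑ i ∈ Pos, ((n : ℤ) - 1 - i) = q * (q - 1) := by
    rw [hPosIco, Finset.sum_Ico_eq_sum_range]
    have hrw : ∀ i ∈ range (n - (n - q)), ((n : ℤ) - 1 - ((n - q) + i : ℕ))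
        = ((q : ℤ) - 1 - i) := by
      intro i _
      have hnq : ((n - q : ℕ) : ℤ) = (n : ℤ) - q := by omega
      push_cast [hnq]
      ring
    rw [Finset.sum_congr rfl hrw]
    have hnq2 : n - (n - q) = q := by omega
    rw [hnq2, Finset.sum_sub_distrib]
    simp only [Finset.sum_const, Finset.card_range, nsmul_eq_mul]
    have := sum_id_int q
    linarith
  have hanti : AntivaryOn (fun i : ℕ => (n : ℤ) - 1 - (i : ℤ)) m (Pos : Set ℕ) := by
    intro i hi j hj hij
    have hin : i < n := by
      have : i ∈ Pos := hi
      simp only [hPosdef, Finset.mem_coe, Finset.mem_filter, Finset.mem_range] at this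
      exact this.1
    have hji : i ≤ j := by
      by_contra hc
      push_neg at hc
      have : m j ≤ m i := hm j i (le_of_lt hc) hin
      omega
    have : (i : ℤ) ≤ j := by exact_mod_cast hji
    simp only []
    linarith
  have hcheb := hanti.card_mul_sum_le_sum_mul_sum
  have hWpos : 2 * ∑ i ∈ Pos, ((n : ℤ) - 1 - i) * m i ≤ ((q : ℤ) - 1) * B := by
    rcases Nat.eq_zero_or_pos q with hq0 | hq0
    · have hPose : Pos = ∅ := Finset.card_eq_zero.mp hq0
      rw [hPose]
      simp only [Finset.sum_empty, mul_zero]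
      have : B = 0 := by rw [hB, hPose]; simp
      rw [this]
      simp
    · have h4 : (q : ℤ) * (2 * ∑ i ∈ Pos, ((n : ℤ) - 1 - i) * m i)
          ≤ (q : ℤ) * (((q : ℤ) - 1) * B) := by
        have h2 : (q : ℤ) * ∑ i ∈ Pos, ((n : ℤ) - 1 - i) * m i
            ≤ (∑ i ∈ Pos, ((n : ℤ) - 1 - i)) * B := hcheb
        nlinarith [h2, hfsum]
      have hqpos : (0 : ℤ) < q := by exact_mod_cast hq0
      exact le_of_mul_le_mul_left h4 hqpos
  have hWneg : ∑ i ∈ Neg, ((n : ℤ) - 1 - i) * m i ≤ (q : ℤ) * (∑ i ∈ Neg, m i) := by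
    rw [Finset.mul_sum]
    apply Finset.sum_le_sum
    intro i hi
    have hi' := hi
    simp only [hNegdef, Finset.mem_filter, Finset.mem_range] at hi'
    have hnotPos : i ∉ Pos := by
      simp only [hPosdef, Finset.mem_filter, Finset.mem_range]
      push_neg
      intro _
      omega
    rw [hPosIco] at hnotPos
    simp only [Finset.mem_Ico] at hnotPos
    push_neg at hnotPos
    have hiq : i < n - q := by
      by_contra hc
      push_neg at hc
      exact absurd (hnotPos hc) (by omega)
    have hqi : (q : ℤ) ≤ (n : ℤ) - 1 - i := by omega
    have hmi : m i ≤ 0 := le_of_lt hi'.2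
    nlinarith [hqi, hmi]
  have hd1 := helper (fun i => ((n : ℤ) - 1 - i) * m i) (fun i h => by simp [h])
  have hd2 := helper m (fun i h => h)
  have hd3 := helper (fun i => (m i) ^ 2) (fun i h => by simp [h])
  have hNegm : ∑ i ∈ Neg, m i = -A := by
    rw [hA, ← Finset.sum_neg_distrib]
    simp
  have hSa2 : A ≤ ∑ i ∈ Neg, (m i) ^ 2 := by
    rw [hA]
    apply Finset.sum_le_sum
    intro i hi
    simp only [hNegdef, Finset.mem_filter] at hi
    nlinarith [hi.2]
  have hSv2 : B ≤ ∑ i ∈ Pos, (m i) ^ 2 := by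
    rw [hB]
    apply Finset.sum_le_sum
    intro i hi
    simp only [hPosdef, Finset.mem_filter] at hi
    nlinarith [hi.2]
  rw [hd1, hd2, hd3, hNegm]
  rw [hNegm] at hWneg
  have hq0' : (0 : ℤ) ≤ q := Int.natCast_nonneg q
  have hsq : (-A + B) ^ 2 = A ^ 2 - 2 * (A * B) + B ^ 2 := by ring
  rw [hsq]
  have hsqAB : 0 ≤ A ^ 2 - 2 * (A * B) + B ^ 2 := by nlinarith [sq_nonneg (A - B)]
  rcases le_or_gt B (2 * A) with hcase | hcase
  · have hp1 : 0 ≤ 2 * ((q : ℤ) * A) - (q : ℤ) * B := by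
      have h := mul_nonneg hq0' (by linarith : (0 : ℤ) ≤ 2 * A - B)
      nlinarith [h]
    linarith [hWpos, hWneg, hSa2, hSv2, hA0, hB0, hsqAB, hp1]
  · have hp2 : 0 ≤ B ^ 2 - 2 * (A * B) - (q : ℤ) * B + 2 * ((q : ℤ) * A) := by
      have h := mul_nonneg (by linarith : (0 : ℤ) ≤ B - q)
        (by linarith : (0 : ℤ) ≤ B - 2 * A)
      nlinarith [h]
    linarith [hWpos, hWneg, hSa2, hSv2, hA0, hB0, sq_nonneg A, hp2]

private lemma core2 (k : ℕ) (m : ℕ → ℤ)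
    (hm : ∀ i j, i ≤ j → j < 2 * k + 1 → m i ≤ m j) :
    ∑ i ∈ range (2 * k + 1), ((k : ℤ) - i) * m i ≤ 0 := by
  have hanti : AntivaryOn (fun i : ℕ => (k : ℤ) - (i : ℤ)) m ((range (2 * k + 1) : Finset ℕ) : Set ℕ) := by
    intro i hi j hj hij
    have hin : i < 2 * k + 1 := by
      simpa using hi
    have hji : i ≤ j := by
      by_contra hc
      push_neg at hc
      have : m j ≤ m i := hm j i (le_of_lt hc) hin
      omega
    have : (i : ℤ) ≤ j := by exact_mod_cast hji
    simp only []
    linarith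
  have hcheb := hanti.card_mul_sum_le_sum_mul_sum
  have hzero : ∑ i ∈ range (2 * k + 1), ((k : ℤ) - i) = 0 := by
    rw [Finset.sum_sub_distrib]
    simp only [Finset.sum_const, Finset.card_range, nsmul_eq_mul]
    have := sum_id_int (2 * k + 1)
    push_cast at this ⊢
    linarith
  rw [hzero, zero_mul, Finset.card_range] at hcheb
  by_contra hc
  push_neg at hc
  have hnpos : (0 : ℤ) < (2 * k + 1 : ℕ) := by positivity
  nlinarith [hcheb, hc, hnpos]

/-- Key combinatorial facts: for a set of `2k+1` distinct integers with sum `M`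
and sum of squares `Q`: `12(Q + M² - 2kM) ≥ (2k+1)((2k+1)²-1)` and
`12 Q ≥ (2k+1)((2k+1)²-1)`. -/
private lemma key_both (kk : ℕ) (S : Finset ℤ) (hS : S.card = 2 * kk + 1) :
    (2 * (kk : ℤ) + 1) * ((2 * (kk : ℤ) + 1) ^ 2 - 1) + 12 * (2 * (kk : ℤ)) * (∑ x ∈ S, x)
      ≤ 12 * (∑ x ∈ S, x ^ 2) + 12 * (∑ x ∈ S, x) ^ 2
    ∧ (2 * (kk : ℤ) + 1) * ((2 * (kk : ℤ) + 1) ^ 2 - 1) ≤ 12 * (∑ x ∈ S, x ^ 2) := by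
  set n := 2 * kk + 1 with hn
  set l := S.sort (· ≤ ·) with hl
  have hlen : l.length = n := by rw [hl, Finset.length_sort, hS]
  set m : ℕ → ℤ := fun i => l.getD i 0 - i + kk with hmdef
  have hstep : ∀ i, i + 1 < n → m i ≤ m (i + 1) := by
    intro i hi
    have hi' : i + 1 < l.length := by omega
    have hii : i < l.length := by omega
    have hlt : l.get ⟨i, hii⟩ < l.get ⟨i + 1, hi'⟩ :=
      (Finset.sortedLT_sort S).pairwise.rel_get_of_lt (by simp)
    have g1 : l.getD i 0 = l.get ⟨i, hii⟩ := by
      rw [List.getD_eq_getElem l 0 hii]; rfl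
    have g2 : l.getD (i + 1) 0 = l.get ⟨i + 1, hi'⟩ := by
      rw [List.getD_eq_getElem l 0 hi']; rfl
    simp only [hmdef]
    rw [g1, g2]
    push_cast
    omega
  have hmono := mono_of_step n m hstep
  have hmap : ∀ f : ℤ → ℤ, ∑ x ∈ S, f x = ∑ i ∈ range n, f (l.getD i 0) := by
    intro f
    rw [finset_sum_eq S f, ← hl, hlen]
  have hx : ∀ i, l.getD i 0 = m i + i - kk := by
    intro i
    simp only [hmdef]
    ring
  set T := ∑ i ∈ range n, m i with hT
  set P2 := ∑ i ∈ range n, (m i) ^ 2 with hP2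
  set PX := ∑ i ∈ range n, (i : ℤ) * m i with hPX
  set Si := ∑ i ∈ range n, (i : ℤ) with hSi
  set Si2 := ∑ i ∈ range n, (i : ℤ) ^ 2 with hSi2
  have hSival : Si = 2 * (kk : ℤ) * kk + kk := by
    have h := sum_id_int n
    rw [← hSi] at h
    push_cast [hn] at h
    linarith
  have hSi2val : 3 * Si2 = (2 * (kk : ℤ) + 1) * kk * (4 * kk + 1) := by
    have h := sum_sq_int n
    rw [← hSi2] at h
    push_cast [hn] at h
    linarith
  have hsum1 : ∑ x ∈ S, x = T + Si - (n : ℤ) * kk := by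
    rw [hmap (fun x => x)]
    rw [Finset.sum_congr rfl (fun i _ => hx i)]
    rw [Finset.sum_sub_distrib, Finset.sum_add_distrib]
    simp only [Finset.sum_const, Finset.card_range, nsmul_eq_mul, ← hT, ← hSi]
  have hsum2 : ∑ x ∈ S, x ^ 2
      = P2 + Si2 + (n : ℤ) * kk ^ 2 + 2 * PX - 2 * kk * T - 2 * kk * Si := by
    rw [hmap (fun x => x ^ 2)]
    have hexp : ∀ i ∈ range n, (l.getD i 0) ^ 2
        = (m i) ^ 2 + (i : ℤ) ^ 2 + (kk : ℤ) ^ 2 + 2 * ((i : ℤ) * m i)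
          - 2 * (kk : ℤ) * m i - 2 * (kk : ℤ) * (i : ℤ) := by
      intro i _
      rw [hx i]
      ring
    rw [Finset.sum_congr rfl hexp]
    rw [Finset.sum_sub_distrib, Finset.sum_sub_distrib, Finset.sum_add_distrib,
      Finset.sum_add_distrib, Finset.sum_add_distrib, ← Finset.mul_sum, ← Finset.mul_sum,
      ← Finset.mul_sum]
    simp only [Finset.sum_const, Finset.card_range, nsmul_eq_mul, ← hP2, ← hSi2, ← hPX,
      ← hT, ← hSi]
    try ring
  have hcore := core n m hmono
  rw [← hP2, ← hT] at hcore
  have hc1 : ∑ i ∈ range n, ((n : ℤ) - 1 - i) * m i = 2 * (kk : ℤ) * T - PX := by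
    have : ∀ i ∈ range n, ((n : ℤ) - 1 - i) * m i
        = 2 * (kk : ℤ) * m i - (i : ℤ) * m i := by
      intro i _
      rw [hn]
      push_cast
      ring
    rw [Finset.sum_congr rfl this, Finset.sum_sub_distrib, ← Finset.mul_sum, ← hT, ← hPX]
  rw [hc1] at hcore
  have hcore2 := core2 kk m (by rw [← hn]; exact hmono)
  have hc2 : ∑ i ∈ range (2 * kk + 1), ((kk : ℤ) - i) * m i = (kk : ℤ) * T - PX := by
    have : ∀ i ∈ range (2 * kk + 1), ((kk : ℤ) - i) * m i
        = (kk : ℤ) * m i - (i : ℤ) * m i := by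
      intro i _
      ring
    rw [Finset.sum_congr rfl this, Finset.sum_sub_distrib, ← Finset.mul_sum]
    try rw [← hn]
    try rw [← hT]
    try rw [← hPX]
  rw [hc2] at hcore2
  have hP2nn : 0 ≤ P2 := Finset.sum_nonneg fun i _ => sq_nonneg _
  have hnz : (n : ℤ) = 2 * (kk : ℤ) + 1 := by rw [hn]; push_cast; ring
  constructor
  · rw [hsum1, hsum2, hSival, hnz]
    nlinarith [hcore, hSi2val]
  · rw [hsum2, hSival, hnz]
    nlinarith [hcore2, hP2nn, hSi2val]

theorem lemma_concrete_form
    (N : ℤ) (hN : 3 ≤ N) (hodd : Odd N)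
    (L m_i m_h : ℝ) (hL : 0 < L) (hmi : 0 < m_i) (hmh : 0 < m_h)
    (δk kF q0 C : ℝ)
    (hδk : δk = 2 * Real.pi / L)
    (hkF : kF = δk * (N - 1) / 2)
    (hq0 : q0 = min kF (m_i / m_h * kF))
    (hC : C = kF ^ 2 / (6 * m_h) * (N * (N + 1) / (N - 1)))
    (p0 : ℝ) (hp0_nonneg : 0 ≤ p0) (hp0_lt : p0 < q0)
    (S : Finset ℤ) (hcard : (S.card : ℤ) = N)
    (E0K k : ℝ)
    (hE0K : E0K = δk ^ 2 / (2 * m_h) * (∑ n ∈ S, (n : ℝ) ^ 2) - C)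
    (hmom : δk * (∑ n ∈ S, (n : ℝ)) + k = p0) :
    p0 - k ≤ m_i / (q0 - p0) * (E0K + k ^ 2 / (2 * m_i) - p0 ^ 2 / (2 * m_i)) := by
  -- extract oddness of the cardinality
  have hoddn : Odd S.card := by
    have h1 : Odd ((S.card : ℤ)) := hcard ▸ hodd
    exact_mod_cast h1
  obtain ⟨kk, hkk⟩ := hoddn
  have hScard : S.card = 2 * kk + 1 := by omega
  have hNval : N = 2 * (kk : ℤ) + 1 := by
    rw [← hcard, hScard]; push_cast; ring
  obtain ⟨hkey1, hkey2⟩ := key_both kk S hScard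
  -- real versions
  set Mr : ℝ := ((∑ x ∈ S, x : ℤ) : ℝ) with hMrdef
  set Qr : ℝ := ((∑ x ∈ S, x ^ 2 : ℤ) : ℝ) with hQrdef
  have hMr : ∑ n ∈ S, (n : ℝ) = Mr := by rw [hMrdef]; push_cast; rfl
  have hQr : ∑ n ∈ S, (n : ℝ) ^ 2 = Qr := by rw [hQrdef]; push_cast; rfl
  have hNR : (N : ℝ) = 2 * (kk : ℝ) + 1 := by rw [hNval]; push_cast; ring
  have hkey1R : (2 * (kk : ℝ) + 1) * ((2 * (kk : ℝ) + 1) ^ 2 - 1) + 12 * (2 * (kk : ℝ)) * Mr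
      ≤ 12 * Qr + 12 * Mr ^ 2 := by
    rw [hMrdef, hQrdef]
    exact_mod_cast hkey1
  have hkey2R : (2 * (kk : ℝ) + 1) * ((2 * (kk : ℝ) + 1) ^ 2 - 1) ≤ 12 * Qr := by
    rw [hQrdef]
    exact_mod_cast hkey2
  have hN3 : (3 : ℝ) ≤ (N : ℝ) := by exact_mod_cast hN
  have hδkpos : 0 < δk := by
    rw [hδk]
    have := Real.pi_pos
    positivity
  have hN1 : (0 : ℝ) < (N : ℝ) - 1 := by linarith
  have hkFpos : 0 < kF := by
    rw [hkF]
    exact div_pos (mul_pos hδkpos hN1) (by norm_num)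
  have hq0p : 0 < q0 - p0 := by linarith
  have hN1' : ((N : ℝ) - 1) ≠ 0 := ne_of_gt hN1
  have hmh' : m_h ≠ 0 := ne_of_gt hmh
  have hmi' : m_i ≠ 0 := ne_of_gt hmi
  have hC' : C = δk ^ 2 / (2 * m_h) * ((N : ℝ) * ((N : ℝ) ^ 2 - 1) / 12) := by
    rw [hC, hkF]
    field_simp
    ring
  set c0r : ℝ := (N : ℝ) * ((N : ℝ) ^ 2 - 1) / 12 with hc0r
  set D : ℝ := Qr - c0r with hD
  have hD0 : 0 ≤ D := by rw [hD, hc0r, hNR]; linarith [hkey2R]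
  have hD1 : ((N : ℝ) - 1) * Mr - Mr ^ 2 ≤ D := by
    rw [hD, hc0r, hNR]; linarith [hkey1R]
  have hE0K' : E0K = δk ^ 2 / (2 * m_h) * D := by
    rw [hE0K, hQr, hC', hD]
    ring
  set c : ℝ := m_i * δk ^ 2 / (2 * m_h) with hcdef
  have hcpos : 0 < c := by rw [hcdef]; positivity
  have hP : p0 - k = δk * Mr := by rw [← hmom, hMr]; ring
  clear_value Mr Qr c0r D c
  -- main estimate : (p0 - k) * q0 ≤ m_i * E0K + (p0 - k)^2 / 2
  have key3 : (p0 - k) * q0 ≤ m_i * E0K + (p0 - k) ^ 2 / 2 := by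
    rw [hP, hE0K']
    have hmE : m_i * (δk ^ 2 / (2 * m_h) * D) = c * D := by rw [hcdef]; ring
    rw [hmE]
    rcases le_total (m_i / m_h * kF) kF with hmin | hmin
    · -- q0 = m_i/m_h * kF, m_i ≤ m_h
      have hq0v : q0 = m_i / m_h * kF := by rw [hq0, min_eq_right hmin]
      have hr1 : m_i / m_h ≤ 1 := by
        have := le_of_mul_le_mul_right (by linarith [hmin] : m_i / m_h * kF ≤ 1 * kF) hkFpos
        linarith
      have hami : m_i ≤ m_h := (div_le_one hmh).mp hr1
      have hLHS : δk * Mr * q0 = c * (((N : ℝ) - 1) * Mr) := by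
        rw [hq0v, hkF, hcdef]
        field_simp
      rw [hLHS]
      have t1 : c * (((N : ℝ) - 1) * Mr - Mr ^ 2) ≤ c * D :=
        mul_le_mul_of_nonneg_left hD1 hcpos.le
      have hcle : c ≤ δk ^ 2 / 2 := by
        rw [hcdef, div_le_div_iff₀ (by positivity) (by norm_num : (0:ℝ) < 2)]
        have h := mul_le_mul_of_nonneg_right hami (sq_nonneg δk)
        linarith [h]
      have t2 : 0 ≤ (δk ^ 2 / 2 - c) * Mr ^ 2 :=
        mul_nonneg (by linarith) (sq_nonneg _)
      linarith [t1, t2]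
    · -- q0 = kF, m_h ≤ m_i
      have hq0v : q0 = kF := by rw [hq0, min_eq_left hmin]
      have hr1 : 1 ≤ m_i / m_h := by
        have := le_of_mul_le_mul_right (by linarith [hmin] : 1 * kF ≤ m_i / m_h * kF) hkFpos
        linarith
      have hami : m_h ≤ m_i := (one_le_div hmh).mp hr1
      have hcge : δk ^ 2 / 2 ≤ c := by
        rw [hcdef, div_le_div_iff₀ (by norm_num : (0:ℝ) < 2) (by positivity)]
        have h := mul_le_mul_of_nonneg_right hami (sq_nonneg δk)
        linarith [h]
      have t1 : δk ^ 2 / 2 * (((N : ℝ) - 1) * Mr - Mr ^ 2) ≤ δk ^ 2 / 2 * D :=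
        mul_le_mul_of_nonneg_left hD1 (by positivity)
      have t2 : δk ^ 2 / 2 * D ≤ c * D := mul_le_mul_of_nonneg_right hcge hD0
      have hLHS : δk * Mr * q0 = δk ^ 2 / 2 * (((N : ℝ) - 1) * Mr) := by
        rw [hq0v, hkF]
        ring
      rw [hLHS]
      linarith [t1, t2]
  -- conclude
  have hrw : m_i / (q0 - p0) * (E0K + k ^ 2 / (2 * m_i) - p0 ^ 2 / (2 * m_i))
      = (m_i * E0K + k ^ 2 / 2 - p0 ^ 2 / 2) / (q0 - p0) := by
    field_simp
  rw [hrw, le_div_iff₀ hq0p]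
  linarith [key3]
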